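/- Let α_1, …, α_t be distinct nonzero complex numbers and b_1, …, b_t complex numbers, and define x : ℤ → ℂ by x_n = ∑_{j=1}^t b_j α_j^n. Then the function x is bounded (i.e. there is M ∈ ℝ with |x_n| ≤ M for all n ∈ ℤ) if and only if b_j = 0 for every index j such that |α_j| ≠ 1. -/

import Mathlib

/- STATEMENT 1: For distinct nonzero complex numbers `α_1, …, α_t` and coefficients
`b_1, …, b_t`, the two-sided sequence `x n = ∑ j, b j * α j ^ n` (n ∈ ℤ) is bounded
if and only if `b j = 0` for every `j` with `|α j| ≠ 1`. -/
theorem stmt_1 (t : ℕ) (α : Fin t → ℂ) (hinj : Function.Injective α)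
    (hα : ∀ j, α j ≠ 0) (b : Fin t → ℂ) :
    (∃ M : ℝ, ∀ n : ℤ, ‖∑ j, b j * α j ^ n‖ ≤ M) ↔
      ∀ j, ‖α j‖ ≠ 1 → b j = 0 := by
  constructor
  · rintro ⟨M, hM⟩ j hj
    by_contra hb
    -- Vandermonde matrix
    set A : Matrix (Fin t) (Fin t) ℂ := fun k i => α i ^ (k : ℕ) with hAdef
    have hdet : IsUnit A.det := by
      have hA : A = (Matrix.vandermonde α).transpose := by
        ext k i; simp [hAdef, Matrix.vandermonde]
      rw [hA, Matrix.det_transpose, Matrix.det_vandermonde]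
      rw [isUnit_iff_ne_zero]
      apply Finset.prod_ne_zero_iff.mpr
      intro i _
      apply Finset.prod_ne_zero_iff.mpr
      intro k hk
      exact sub_ne_zero_of_ne (fun h => (ne_of_lt (Finset.mem_Ioi.mp hk)) (hinj h).symm)
    -- key identity
    have key : ∀ m : ℤ, b j * α j ^ m = ∑ k, A⁻¹ j k * (∑ i, b i * α i ^ (m + (k : ℕ))) := by
      intro m
      have hu : ∀ k : Fin t, (∑ i, b i * α i ^ (m + (k : ℕ))) =
          A.mulVec (fun i => b i * α i ^ m) k := by
        intro k
        simp only [Matrix.mulVec, dotProduct, hAdef]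
        apply Finset.sum_congr rfl
        intro i _
        rw [zpow_add₀ (hα i), zpow_natCast]
        ring
      calc b j * α j ^ m = ((A⁻¹ * A).mulVec (fun i => b i * α i ^ m)) j := by
            rw [Matrix.nonsing_inv_mul A hdet]; simp [Matrix.mulVec, dotProduct, Matrix.one_apply]
        _ = (A⁻¹.mulVec (A.mulVec (fun i => b i * α i ^ m))) j := by
            rw [Matrix.mulVec_mulVec]
        _ = ∑ k, A⁻¹ j k * (∑ i, b i * α i ^ (m + (k : ℕ))) := by
            simp only [Matrix.mulVec, dotProduct]
            exact Finset.sum_congr rfl fun k _ => by rw [hu k]; simp [Matrix.mulVec, dotProduct]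
    set C : ℝ := ∑ k : Fin t, ‖A⁻¹ j k‖ * M with hC
    have bound : ∀ m : ℤ, ‖b j‖ * ‖α j‖ ^ m ≤ C := by
      intro m
      have := key m
      calc ‖b j‖ * ‖α j‖ ^ m
          = ‖b j * α j ^ m‖ := by rw [norm_mul, norm_zpow]
        _ = ‖∑ k, A⁻¹ j k * (∑ i, b i * α i ^ (m + (k : ℕ)))‖ := by rw [this]
        _ ≤ ∑ k, ‖A⁻¹ j k * (∑ i, b i * α i ^ (m + (k : ℕ)))‖ :=
            norm_sum_le _ _
        _ ≤ C := by
            apply Finset.sum_le_sum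
            intro k _
            rw [norm_mul]
            exact mul_le_mul_of_nonneg_left (hM _) (norm_nonneg _)
    set r : ℝ := ‖α j‖ with hr
    have rpos : 0 < r := norm_pos_iff.mpr (hα j)
    have hbpos : 0 < ‖b j‖ := norm_pos_iff.mpr hb
    rcases lt_or_gt_of_ne hj with hlt | hgt
    · -- r < 1, use negative exponents
      have h1 : 1 < r⁻¹ := one_lt_inv₀ rpos |>.mpr hlt
      obtain ⟨n, hn⟩ := pow_unbounded_of_one_lt (C / ‖b j‖) h1
      have := bound (-(n : ℤ))
      rw [zpow_neg, zpow_natCast, ← inv_pow] at this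
      have : C / ‖b j‖ < r⁻¹ ^ n := hn
      have h2 : C < ‖b j‖ * r⁻¹ ^ n := by
        rwa [div_lt_iff₀ hbpos, mul_comm] at this
      linarith [bound (-(n : ℤ)), h2,
        (by rw [zpow_neg, zpow_natCast, ← inv_pow] :
          (r : ℝ) ^ (-(n : ℤ)) = r⁻¹ ^ n) ▸ bound (-(n : ℤ))]
    · obtain ⟨n, hn⟩ := pow_unbounded_of_one_lt (C / ‖b j‖) hgt
      have h2 : C < ‖b j‖ * r ^ n := by
        rwa [div_lt_iff₀ hbpos, mul_comm] at hn
      have h3 := bound (n : ℤ)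
      rw [zpow_natCast] at h3
      linarith
  · intro h
    refine ⟨∑ j, ‖b j‖, fun n => ?_⟩
    calc ‖∑ j, b j * α j ^ n‖ ≤ ∑ j, ‖b j * α j ^ n‖ :=
          norm_sum_le _ _
      _ ≤ ∑ j, ‖b j‖ := by
          apply Finset.sum_le_sum
          intro j _
          rw [norm_mul, norm_zpow]
          by_cases hj : ‖α j‖ = 1
          · rw [hj, one_zpow, mul_one]
          · rw [h j hj]; simp
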